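/- Let (X, d) be an uncountable compact metric space and H an RKHS on X with continuous kernel k. Then the inclusion C(X) ⊆ H fails; consequently H ⊊ C(X) whenever k is continuous (since then H ⊆ C(X)). -/

import Mathlib

open scoped RealInnerProductSpace

/-- For an uncountable compact metric space `X` and an RKHS `H` on `X` with continuous
kernel `k`, the inclusion `C(X) ⊆ H` fails; moreover every member of `H` is continuous
and `H` is a proper subset of `C(X)`. -/
theorem RKHS_with_continuous_kernel_proper_subset
    {X : Type*} [MetricSpace X] [CompactSpace X] (hX : ¬ Countable X)
    (H : Type*) [NormedAddCommGroup H] [InnerProductSpace ℝ H] [CompleteSpace H]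
    (ι : H →ₗ[ℝ] (X → ℝ)) (hinj : Function.Injective ι)
    (k : X → X → ℝ) (Φ : X → H)
    (hfeat : ∀ x y : X, ι (Φ x) y = k y x)
    (hrep : ∀ (h : H) (x : X), ι h x = ⟪h, Φ x⟫)
    (hk : Continuous fun p : X × X => k p.1 p.2) :
    (¬ ∀ f : X → ℝ, Continuous f → f ∈ Set.range ι) ∧
      (∀ h : H, Continuous (ι h)) ∧
      Set.range ι ⊂ {f : X → ℝ | Continuous f} := by
  -- kernel values as inner products
  have hkk : ∀ x y : X, ⟪Φ x, Φ y⟫ = k y x := fun x y => by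
    rw [← hrep]; exact hfeat x y
  -- the feature map is continuous
  have hΦ : Continuous Φ := by
    rw [continuous_iff_continuousAt]
    intro x
    have hsq : Filter.Tendsto (fun y => ‖Φ y - Φ x‖ ^ 2) (nhds x) (nhds 0) := by
      have heq : ∀ y, ‖Φ y - Φ x‖ ^ 2 = k y y - k x y - k y x + k x x := by
        intro y
        rw [← real_inner_self_eq_norm_sq, inner_sub_sub_self, hkk, hkk, hkk, hkk]
      have hg : Continuous fun y => k y y - k x y - k y x + k x x := by
        have h1 : Continuous fun y : X => k y y :=
          hk.comp (continuous_id.prodMk continuous_id)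
        have h2 : Continuous fun y : X => k x y :=
          hk.comp (continuous_const.prodMk continuous_id)
        have h3 : Continuous fun y : X => k y x :=
          hk.comp (continuous_id.prodMk continuous_const)
        continuity
      have := hg.tendsto x
      have hgx : k x x - k x x - k x x + k x x = 0 := by ring
      rw [hgx] at this
      simp only [heq]
      exact this
    rw [Metric.continuousAt_iff']
    intro ε hε
    have hsqrt : Filter.Tendsto (fun y => ‖Φ y - Φ x‖) (nhds x) (nhds 0) := by
      have : Filter.Tendsto (fun y => Real.sqrt (‖Φ y - Φ x‖ ^ 2)) (nhds x)
          (nhds (Real.sqrt 0)) := (Real.continuous_sqrt.tendsto 0).comp hsq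
      simpa [Real.sqrt_sq (norm_nonneg _)] using this
    have := Metric.tendsto_nhds.mp hsqrt ε hε
    filter_upwards [this] with y hy
    rw [dist_eq_norm]
    simpa [abs_of_nonneg (norm_nonneg _)] using hy
  -- every element of H is continuous
  have hcont : ∀ h : H, Continuous (ι h) := by
    intro h
    have : (ι h : X → ℝ) = fun x => ⟪h, Φ x⟫ := funext (hrep h)
    rw [this]
    exact Continuous.inner continuous_const hΦ
  -- the main negative part
  have hneg : ¬ ∀ f : X → ℝ, Continuous f → f ∈ Set.range ι := by
    intro hall
    -- choose preimages
    have hex : ∀ f : C(X, ℝ), ∃ h : H, ι h = (f : X → ℝ) := fun f =>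
      hall f f.continuous
    choose T0 hT0 using hex
    have hadd : ∀ f g : C(X, ℝ), T0 (f + g) = T0 f + T0 g := by
      intro f g
      apply hinj
      rw [map_add, hT0, hT0, hT0, ContinuousMap.coe_add]
    have hsmul : ∀ (c : ℝ) (f : C(X, ℝ)), T0 (c • f) = c • T0 f := by
      intro c f
      apply hinj
      rw [map_smul, hT0, hT0, ContinuousMap.coe_smul]
    let T : C(X, ℝ) →ₗ[ℝ] H :=
      { toFun := T0, map_add' := hadd, map_smul' := hsmul }
    have hTc : Continuous T := by
      apply T.continuous_of_seq_closed_graph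
      intro u f h hu hTu
      apply hinj
      show ι h = ι (T0 f)
      rw [hT0]
      funext x
      have h1 : Filter.Tendsto (fun n => (u n) x) Filter.atTop (nhds (f x)) :=
        ((continuous_eval_const x).tendsto f).comp hu
      have h2 : Filter.Tendsto (fun n => ι (T (u n)) x) Filter.atTop
          (nhds (ι h x)) := by
        simp only [hrep]
        exact ((Continuous.inner continuous_id continuous_const).tendsto h).comp hTu
      have h3 : ∀ n, ι (T (u n)) x = (u n) x := fun n => by
        show ι (T0 (u n)) x = (u n) x
        rw [hT0]
      simp only [h3] at h2
      exact (tendsto_nhds_unique h1 h2).symm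
    let L : C(X, ℝ) →L[ℝ] H := ⟨T, hTc⟩
    -- an accumulation point exists
    obtain ⟨x₀, hx₀⟩ : ∃ x₀ : X, (nhdsWithin x₀ {x₀}ᶜ).NeBot := by
      by_contra hno
      push_neg at hno
      have hdisc : DiscreteTopology X := by
        rw [discreteTopology_iff_nhds_ne]
        intro x
        have := hno x
        exact this
      exact hX (finite_of_compact_of_discrete).to_countable
    haveI := hx₀
    -- find y ≠ x₀ with Φ y close to Φ x₀
    have htend : Filter.Tendsto (fun y => ‖Φ y - Φ x₀‖) (nhdsWithin x₀ {x₀}ᶜ)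
        (nhds 0) := by
      have : Filter.Tendsto Φ (nhdsWithin x₀ {x₀}ᶜ) (nhds (Φ x₀)) :=
        (hΦ.tendsto x₀).mono_left nhdsWithin_le_nhds
      have := (this.sub_const (Φ x₀)).norm
      simpa using this
    have hLpos : (0 : ℝ) < ‖L‖ + 1 := by positivity
    have hev : ∀ᶠ y in nhdsWithin x₀ {x₀}ᶜ, ‖Φ y - Φ x₀‖ < (‖L‖ + 1)⁻¹ :=
      (Metric.tendsto_nhds.mp htend ((‖L‖ + 1)⁻¹) (by positivity)).mono (by
        intro y hy
        rwa [Real.dist_eq, sub_zero, abs_of_nonneg (norm_nonneg _)] at hy)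
    obtain ⟨y, hyclose, hyne⟩ :=
      (hev.and (eventually_mem_nhdsWithin)).exists
    have hyne : y ≠ x₀ := hyne
    have hd : (0 : ℝ) < dist y x₀ := dist_pos.mpr hyne
    -- the test function
    let f : C(X, ℝ) :=
      ⟨fun z => min (dist z x₀ / dist y x₀) 1, by
        apply Continuous.min _ continuous_const
        exact (continuous_id.dist continuous_const).div_const _⟩
    have hfx₀ : f x₀ = 0 := by
      show min (dist x₀ x₀ / dist y x₀) 1 = 0
      simp
    have hfy : f y = 1 := by
      show min (dist y x₀ / dist y x₀) 1 = 1
      rw [div_self hd.ne']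
      simp
    have hfnorm : ‖f‖ ≤ 1 := by
      apply ContinuousMap.norm_le _ zero_le_one |>.mpr
      intro z
      have h1 : f z ≤ 1 := min_le_right _ _
      have h0 : 0 ≤ f z := le_min (div_nonneg dist_nonneg hd.le) zero_le_one
      rw [Real.norm_eq_abs, abs_of_nonneg h0]
      exact h1
    -- derive the contradiction
    have hLf : ‖L f‖ ≤ ‖L‖ + 1 := by
      calc ‖L f‖ ≤ ‖L‖ * ‖f‖ := L.le_opNorm f
        _ ≤ ‖L‖ * 1 := mul_le_mul_of_nonneg_left hfnorm (norm_nonneg L)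
        _ ≤ ‖L‖ + 1 := by linarith [norm_nonneg L]
    have key : (1 : ℝ) = ⟪L f, Φ y - Φ x₀⟫ := by
      rw [inner_sub_right]
      have e1 : ⟪L f, Φ y⟫ = f y := by rw [← hrep]; show ι (T0 f) y = f y; rw [hT0]
      have e2 : ⟪L f, Φ x₀⟫ = f x₀ := by
        rw [← hrep]; show ι (T0 f) x₀ = f x₀; rw [hT0]
      rw [e1, e2, hfy, hfx₀]
      ring
    have hb : (1 : ℝ) < 1 := by
      calc (1 : ℝ) = ⟪L f, Φ y - Φ x₀⟫ := key
        _ ≤ ‖L f‖ * ‖Φ y - Φ x₀‖ := real_inner_le_norm _ _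
        _ ≤ (‖L‖ + 1) * ‖Φ y - Φ x₀‖ :=
            mul_le_mul_of_nonneg_right hLf (norm_nonneg _)
        _ < (‖L‖ + 1) * (‖L‖ + 1)⁻¹ :=
            mul_lt_mul_of_pos_left hyclose hLpos
        _ = 1 := mul_inv_cancel₀ hLpos.ne'
    exact absurd hb (lt_irrefl 1)
  refine ⟨hneg, hcont, ?_⟩
  constructor
  · rintro f ⟨h, rfl⟩
    exact hcont h
  · intro hsub
    exact hneg fun f hf => hsub hf
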